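/- Moment bound for the derivative of the information integrand (Lemma B.1): Under Assumptions 1 and 2 (in particular λ(t;θ) ≥ λ_L > 0 a.s., E((∂²_θ λ(t;θ))²) < ∞, and finite variance of h(t;θ0)), a sufficient condition for E(|∂_{θ0} h_{ij}(t)|^{1+η}) < ∞ for some η > 0 is that E((∂_{θi}λ(t;θ))³) < ∞; indeed it suffices to take any η with 0 < η < 1/4. -/

import Mathlib

open MeasureTheory ProbabilityTheory Filter Topology

noncomputable section

namespace PPB

lemma rpow_le_one_add_rpow {c s t : ℝ} (hc : 0 ≤ c) (hs : 0 ≤ s) (hst : s ≤ t) :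
    c ^ s ≤ 1 + c ^ t := by
  rcases le_or_gt c 1 with h | h
  · have h1 : c ^ s ≤ 1 := Real.rpow_le_one hc h hs
    have h2 : 0 ≤ c ^ t := Real.rpow_nonneg hc t
    linarith
  · have h1 : c ^ s ≤ c ^ t := Real.rpow_le_rpow_of_exponent_le h.le hst
    linarith

lemma add_rpow_le {u v s : ℝ} (hu : 0 ≤ u) (hv : 0 ≤ v) (hs : 0 ≤ s) :
    (u + v) ^ s ≤ 2 ^ s * (u ^ s + v ^ s) := by
  have h1 : u + v ≤ 2 * max u v := by
    have := le_max_left u v; have := le_max_right u v; linarith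
  have hmax : (0:ℝ) ≤ max u v := le_trans hu (le_max_left u v)
  have h2 : (max u v) ^ s ≤ u ^ s + v ^ s := by
    rcases max_cases u v with ⟨h, _⟩ | ⟨h, _⟩ <;> rw [h]
    · have := Real.rpow_nonneg hv s; linarith
    · have := Real.rpow_nonneg hu s; linarith
  have h3 : (0:ℝ) ≤ 2 ^ s := Real.rpow_nonneg (by norm_num) s
  calc (u + v) ^ s ≤ (2 * max u v) ^ s := Real.rpow_le_rpow (by linarith) h1 hs
    _ = 2 ^ s * (max u v) ^ s := Real.mul_rpow (by norm_num) hmax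
    _ ≤ 2 ^ s * (u ^ s + v ^ s) := mul_le_mul_of_nonneg_left h2 h3

lemma abs_rpow_eq_sq_rpow (x s : ℝ) : |x| ^ s = (x ^ 2) ^ (s / 2) := by
  rw [← sq_abs, ← Real.rpow_natCast |x| 2, ← Real.rpow_mul (abs_nonneg x)]
  congr 1
  push_cast
  ring

lemma conj_exp {η : ℝ} (h0 : 0 < η) (h4 : η < 1/4) :
    (4 / (1 + η)).HolderConjugate (4 / (3 - η)) := by
  rw [Real.holderConjugate_iff]
  constructor
  · rw [lt_div_iff₀ (by linarith)]; linarith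
  · field_simp; ring

lemma exp_eq_two {η : ℝ} (h0 : 0 < η) : (1 + η) / 2 * (4 / (1 + η)) = 2 := by
  field_simp; ring

lemma exp_le_one {η : ℝ} (h0 : 0 < η) (h4 : η < 1/4) :
    (1 + η) / 2 * (4 / (3 - η)) ≤ 1 := by
  rw [div_mul_div_comm, div_le_one (by nlinarith)]
  nlinarith

set_option maxHeartbeats 1000000 in
/-- **Lemma B.1.** Moment bound for the derivative of the information integrand (scalar
case): if the intensity is bounded below by `λ_L > 0`, the second derivative `∂²_θλ(t;θ)`
is square integrable, the information integrand `h = (∂_θλ)²/λ` has finite variance, and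
`E(|∂_θλ(t;θ)|³) < ∞`, then `E(|∂_θ h(t;θ0)|^{1+η}) < ∞`; indeed any `0 < η < 1/4` works,
where `∂_θ h = (∂_θλ)(∂²_θλ)/λ − (∂_θλ)³/λ²`. -/
theorem information_derivative_moment_bound
    {Ω : Type*} [MeasurableSpace Ω] (P : Measure Ω) (hP : IsProbabilityMeasure P)
    -- λ(t;θ0), ∂_θλ(t;θ0) and ∂²_θλ(t;θ0), at a fixed time t, as random variables
    (lam dlam d2lam : Ω → ℝ)
    (hmeas : Measurable lam ∧ Measurable dlam ∧ Measurable d2lam)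
    -- strict positivity of λ, strengthened to a uniform lower bound λ_L > 0
    (lamL : ℝ) (hlamL : 0 < lamL) (hlam : ∀ᵐ ω ∂P, lamL ≤ lam ω)
    -- Assumption 2(a): E((∂_θλ)²) < ∞ and E((∂²_θλ)²) < ∞
    (hd1 : Integrable (fun ω => (dlam ω)^2) P)
    (hd2 : Integrable (fun ω => (d2lam ω)^2) P)
    -- Assumption 2(b): h = (∂_θλ)²/λ has finite variance
    (hhvar : Integrable (fun ω => ((dlam ω)^2 / lam ω)^2) P)
    -- the sufficient condition: E(|∂_θλ|³) < ∞
    (hd3 : Integrable (fun ω => |dlam ω|^3) P) :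
    ∀ η : ℝ, 0 < η → η < 1/4 →
      Integrable (fun ω =>
        |dlam ω * d2lam ω / lam ω - (dlam ω)^3 / (lam ω)^2| ^ (1 + η)) P := by
  intro η hη0 hη4
  obtain ⟨hml, hmd, hmd2⟩ := hmeas
  have hs0 : (0:ℝ) ≤ 1 + η := by linarith
  have hs'0 : (0:ℝ) ≤ (1 + η) / 2 := by linarith
  have hpq := conj_exp hη0 hη4
  have hp1 : 1 ≤ 4 / (1 + η) := hpq.lt.le
  have hq1 : 1 ≤ 4 / (3 - η) := hpq.symm.lt.le
  set C : ℝ := (1 / lamL) ^ ((1 + η) / 2) with hC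
  have hC0 : 0 ≤ C := Real.rpow_nonneg (by positivity) _
  set g : Ω → ℝ :=
    fun ω => 2 ^ (1 + η) * C * (2 * ((dlam ω)^2 / lam ω)^2 + (d2lam ω)^2 + 2) with hg
  have hgint : Integrable g P := by
    apply Integrable.const_mul
    exact ((hhvar.const_mul 2).add hd2).add (integrable_const 2)
  apply Integrable.mono' hgint
  · apply ((Real.continuous_rpow_const hs0).measurable.comp ?_).aestronglyMeasurable
    exact (((hmd.mul hmd2).div hml).sub ((hmd.pow_const 3).div (hml.pow_const 2))).abs
  · filter_upwards [hlam] with ω hω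
    have hl0 : 0 < lam ω := lt_of_lt_of_le hlamL hω
    set a : ℝ := (dlam ω)^2 / lam ω with ha
    set b : ℝ := d2lam ω with hb
    set X : ℝ := dlam ω * d2lam ω / lam ω with hX
    set Y : ℝ := (dlam ω)^3 / (lam ω)^2 with hY
    have ha0 : 0 ≤ a := by positivity
    -- bound on |X| ^ (1+η)
    have hXb : |X| ^ (1 + η) ≤ (a ^ (2:ℝ) + (1 + b ^ 2)) * C := by
      have h1 : X ^ 2 = a * b ^ 2 / lam ω := by
        rw [hX, ha, hb]; field_simp
      have h2 : X ^ 2 ≤ a * b ^ 2 / lamL := by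
        rw [h1]; gcongr
      have h4 : (X ^ 2) ^ ((1 + η) / 2) ≤ (a * b ^ 2 / lamL) ^ ((1 + η) / 2) :=
        Real.rpow_le_rpow (sq_nonneg X) h2 hs'0
      have h5 : (a * b ^ 2 / lamL) ^ ((1 + η) / 2)
          = a ^ ((1 + η) / 2) * (b ^ 2) ^ ((1 + η) / 2) * C := by
        rw [hC, div_eq_mul_one_div (a * b ^ 2) lamL,
          Real.mul_rpow (by positivity) (by positivity),
          Real.mul_rpow ha0 (by positivity)]
      have hy : a ^ ((1 + η) / 2) * (b ^ 2) ^ ((1 + η) / 2)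
          ≤ a ^ (2:ℝ) + (1 + b ^ 2) := by
        have hyoung := Real.young_inequality_of_nonneg
          (Real.rpow_nonneg ha0 ((1 + η) / 2)) (Real.rpow_nonneg (sq_nonneg b) ((1 + η) / 2)) hpq
        have e1 : (a ^ ((1 + η) / 2)) ^ (4 / (1 + η)) = a ^ (2:ℝ) := by
          rw [← Real.rpow_mul ha0, exp_eq_two hη0]
        have e3 : ((b ^ 2) ^ ((1 + η) / 2)) ^ (4 / (3 - η)) ≤ 1 + b ^ 2 := by
          rw [← Real.rpow_mul (sq_nonneg b)]
          have := rpow_le_one_add_rpow (sq_nonneg b)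
            (by positivity : (0:ℝ) ≤ (1 + η) / 2 * (4 / (3 - η))) (exp_le_one hη0 hη4)
          rwa [Real.rpow_one] at this
        have h7 : (a ^ ((1 + η) / 2)) ^ (4 / (1 + η)) / (4 / (1 + η))
            ≤ (a ^ ((1 + η) / 2)) ^ (4 / (1 + η)) :=
          div_le_self (Real.rpow_nonneg (Real.rpow_nonneg ha0 _) _) hp1
        have h8 : ((b ^ 2) ^ ((1 + η) / 2)) ^ (4 / (3 - η)) / (4 / (3 - η))
            ≤ ((b ^ 2) ^ ((1 + η) / 2)) ^ (4 / (3 - η)) :=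
          div_le_self (Real.rpow_nonneg (Real.rpow_nonneg (sq_nonneg b) _) _) hq1
        calc a ^ ((1 + η) / 2) * (b ^ 2) ^ ((1 + η) / 2)
            ≤ (a ^ ((1 + η) / 2)) ^ (4 / (1 + η)) / (4 / (1 + η))
              + ((b ^ 2) ^ ((1 + η) / 2)) ^ (4 / (3 - η)) / (4 / (3 - η)) := hyoung
          _ ≤ (a ^ ((1 + η) / 2)) ^ (4 / (1 + η))
              + ((b ^ 2) ^ ((1 + η) / 2)) ^ (4 / (3 - η)) := by linarith
          _ ≤ a ^ (2:ℝ) + (1 + b ^ 2) := by rw [e1]; linarith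
      calc |X| ^ (1 + η) = (X ^ 2) ^ ((1 + η) / 2) := abs_rpow_eq_sq_rpow X (1 + η)
        _ ≤ (a * b ^ 2 / lamL) ^ ((1 + η) / 2) := h4
        _ = a ^ ((1 + η) / 2) * (b ^ 2) ^ ((1 + η) / 2) * C := h5
        _ ≤ (a ^ (2:ℝ) + (1 + b ^ 2)) * C := mul_le_mul_of_nonneg_right hy hC0
    -- bound on |Y| ^ (1+η)
    have hYb : |Y| ^ (1 + η) ≤ (1 + a ^ (2:ℝ)) * C := by
      have h1 : Y ^ 2 = a ^ 3 / lam ω := by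
        rw [hY, ha]; field_simp
      have h2 : Y ^ 2 ≤ a ^ 3 / lamL := by
        rw [h1]; gcongr
      have h4 : (Y ^ 2) ^ ((1 + η) / 2) ≤ (a ^ 3 / lamL) ^ ((1 + η) / 2) :=
        Real.rpow_le_rpow (sq_nonneg Y) h2 hs'0
      have h5 : (a ^ 3 / lamL) ^ ((1 + η) / 2) = (a ^ 3) ^ ((1 + η) / 2) * C := by
        rw [hC, div_eq_mul_one_div (a ^ 3) lamL,
          Real.mul_rpow (by positivity) (by positivity)]
      have h6 : (a ^ 3) ^ ((1 + η) / 2) = a ^ ((3:ℝ) * ((1 + η) / 2)) := by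
        rw [← Real.rpow_natCast a 3, ← Real.rpow_mul ha0]
        norm_num
      have h7 : a ^ ((3:ℝ) * ((1 + η) / 2)) ≤ 1 + a ^ (2:ℝ) :=
        rpow_le_one_add_rpow ha0 (by positivity) (by linarith)
      calc |Y| ^ (1 + η) = (Y ^ 2) ^ ((1 + η) / 2) := abs_rpow_eq_sq_rpow Y (1 + η)
        _ ≤ (a ^ 3 / lamL) ^ ((1 + η) / 2) := h4
        _ = (a ^ 3) ^ ((1 + η) / 2) * C := h5
        _ ≤ (1 + a ^ (2:ℝ)) * C := by
            rw [h6]; exact mul_le_mul_of_nonneg_right h7 hC0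
    have ha2 : a ^ (2:ℝ) = a ^ 2 := by
      rw [← Real.rpow_natCast a 2]
      norm_num
    have hfin : |X - Y| ^ (1 + η) ≤ g ω := by
      have h1 : |X - Y| ≤ |X| + |Y| := abs_sub _ _
      have h2 : |X - Y| ^ (1 + η) ≤ (|X| + |Y|) ^ (1 + η) :=
        Real.rpow_le_rpow (abs_nonneg _) h1 hs0
      have h3 : (|X| + |Y|) ^ (1 + η) ≤ 2 ^ (1 + η) * (|X| ^ (1 + η) + |Y| ^ (1 + η)) :=
        add_rpow_le (abs_nonneg X) (abs_nonneg Y) hs0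
      have heq : (a ^ (2:ℝ) + (1 + b ^ 2)) * C + (1 + a ^ (2:ℝ)) * C
          = C * (2 * a ^ 2 + b ^ 2 + 2) := by rw [ha2]; ring
      have h5 : |X| ^ (1 + η) + |Y| ^ (1 + η) ≤ C * (2 * a ^ 2 + b ^ 2 + 2) := by
        rw [← heq]; linarith
      have h6 : (0:ℝ) ≤ 2 ^ (1 + η) := Real.rpow_nonneg (by norm_num) _
      have h7 := mul_le_mul_of_nonneg_left h5 h6
      have hgeq : g ω = 2 ^ (1 + η) * (C * (2 * a ^ 2 + b ^ 2 + 2)) := by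
        rw [hg, ha, hb]; ring
      rw [hgeq] at *
      linarith
    have hnn : (0:ℝ) ≤ |X - Y| ^ (1 + η) := Real.rpow_nonneg (abs_nonneg _) _
    rw [Real.norm_eq_abs, abs_of_nonneg hnn]
    exact hfin

end PPB
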